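/- For any matroid M on ground set E with nullity function η, and any subset X ⊆ E, the maximum number of non-redundant circuits of M contained in X equals η(X) = |X| − ρ(X), where ρ is the rank function. (A family of circuits C₁,…,C_r is non-redundant if for each j, the union of the C_i with i ≠ j is a proper subset of the union of all C_i.) -/

import Mathlib

open Set

/-- The rank of a set in a matroid: the largest cardinality of an independent subset. -/
noncomputable def mrank {α : Type*} (M : Matroid α) (X : Set α) : ℕ :=
  sSup {n | ∃ I ⊆ X, M.Indep I ∧ I.ncard = n}

/-- The nullity of a set in a matroid. -/
noncomputable def mnullity {α : Type*} (M : Matroid α) (X : Set α) : ℕ :=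
  X.ncard - mrank M X

/-- A circuit of a matroid: a minimal dependent set. -/
def IsMCircuit {α : Type*} (M : Matroid α) (C : Set α) : Prop :=
  M.Dep C ∧ ∀ D ⊂ C, ¬ M.Dep D

/-- A family of circuits is non-redundant if deleting any member strictly shrinks the union. -/
def NonRedundant {α : Type*} {r : ℕ} (C : Fin r → Set α) : Prop :=
  ∀ j, (⋃ i, ⋃ (_ : i ≠ j), C i) ⊂ ⋃ i, C i

/-- Any independent subset of `X` is at most as large as a basis of `X`. -/
lemma ncard_le_of_basis {α : Type*} {M : Matroid α} [M.Finite] {I K X : Set α}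
    (hK : M.IsBasis K X) (hI : M.Indep I) (hIX : I ⊆ X) : I.ncard ≤ K.ncard := by
  by_contra hlt
  push_neg at hlt
  have hKfin : K.Finite := M.ground_finite.subset hK.indep.subset_ground
  have hIfin : I.Finite := M.ground_finite.subset hI.subset_ground
  have hcard : K.encard < I.encard := by
    rw [← hKfin.cast_ncard_eq, ← hIfin.cast_ncard_eq, Nat.cast_lt]
    exact hlt
  obtain ⟨x, hxIK, hxind⟩ := hK.indep.augment hI hcard
  exact hK.isBasis'.insert_not_indep ⟨hIX hxIK.1, hxIK.2⟩ hxind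

lemma mrank_eq_of_basis {α : Type*} {M : Matroid α} [M.Finite] {K X : Set α}
    (hK : M.IsBasis K X) : mrank M X = K.ncard := by
  apply IsGreatest.csSup_eq
  constructor
  · exact ⟨K, hK.subset, hK.indep, rfl⟩
  · rintro n ⟨I, hIX, hI, rfl⟩
    exact ncard_le_of_basis hK hI hIX

/-- Every finite dependent set contains a circuit. -/
lemma exists_circuit_subset {α : Type*} {M : Matroid α} :
    ∀ (n : ℕ) (D : Set α), D.Finite → D.ncard = n → M.Dep D → ∃ C ⊆ D, IsMCircuit M C := by
  intro n
  induction n using Nat.strong_induction_on with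
  | _ n ih =>
    intro D hfin hcard hD
    by_cases h : ∀ D' ⊂ D, ¬ M.Dep D'
    · exact ⟨D, subset_rfl, hD, h⟩
    · push_neg at h
      obtain ⟨D', hsub, hD'⟩ := h
      subst hcard
      obtain ⟨C, hCD', hC⟩ := ih _ (Set.ncard_lt_ncard hsub hfin) D'
        (hfin.subset hsub.subset) rfl hD'
      exact ⟨C, hCD'.trans hsub.subset, hC⟩

/-- In a circuit, each element is in the closure of the rest. -/
lemma circuit_mem_closure_diff {α : Type*} {M : Matroid α} {C : Set α} {x : α}
    (hC : IsMCircuit M C) (hx : x ∈ C) : x ∈ M.closure (C \ {x}) := by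
  have hCE : C ⊆ M.E := hC.1.subset_ground
  have hssub : C \ {x} ⊂ C := Set.sdiff_singleton_ssubset.mpr hx
  have hind : M.Indep (C \ {x}) := by
    rw [← Matroid.not_dep_iff ((Set.diff_subset).trans hCE)]
    exact hC.2 _ hssub
  by_contra hxc
  rw [hind.notMem_closure_iff (hCE hx)] at hxc
  rw [Set.insert_diff_singleton, Set.insert_eq_of_mem hx] at hxc
  exact hC.1.1 hxc.1

theorem stmt0 {α : Type*} (M : Matroid α) [M.Finite] (X : Set α) (hX : X ⊆ M.E) :
    IsGreatest
      {n | ∃ C : Fin n → Set α, (∀ i, IsMCircuit M (C i) ∧ C i ⊆ X) ∧ NonRedundant C}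
      (X.ncard - mrank M X) := by
  have hXfin : X.Finite := M.ground_finite.subset hX
  constructor
  · -- membership: construct X.ncard - mrank M X non-redundant circuits
    obtain ⟨K, hK⟩ := M.exists_isBasis X hX
    have hKX : K ⊆ X := hK.subset
    have hrk : mrank M X = K.ncard := mrank_eq_of_basis hK
    set D := X \ K with hD
    have hDfin : D.Finite := hXfin.subset diff_subset
    have hDcard : D.ncard = X.ncard - mrank M X := by
      rw [hrk, hD, Set.ncard_diff hKX (hXfin.subset hKX)]
    have : Finite ↥D := hDfin.to_subtype
    have hnc : Nat.card ↥D = X.ncard - mrank M X := by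
      rw [Nat.card_coe_set_eq, hDcard]
    let eqv : ↥D ≃ Fin (X.ncard - mrank M X) := Finite.equivFinOfCardEq hnc
    set f : Fin (X.ncard - mrank M X) → α := fun i => (eqv.symm i : α) with hf
    have hfD : ∀ i, f i ∈ D := fun i => (eqv.symm i).2
    have hfinj : Function.Injective f := fun i j hij => by
      have := Subtype.coe_injective hij
      simpa using congrArg eqv (this : eqv.symm i = eqv.symm j)
    -- for each i, a circuit inside insert (f i) K containing f i
    have hCex : ∀ i, ∃ C ⊆ insert (f i) K, IsMCircuit M C := by
      intro i
      have hdep : M.Dep (insert (f i) K) := hK.insert_dep (hfD i)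
      exact exists_circuit_subset _ _
        ((hXfin.subset hKX).insert _) rfl hdep
    choose C hCsub hCcirc using hCex
    have hfC : ∀ i, f i ∈ C i := by
      intro i
      by_contra hfi
      have : C i ⊆ K := fun x hx => by
        rcases hCsub i hx with rfl | h
        · exact absurd hx hfi
        · exact h
      exact (hCcirc i).1.1 (hK.indep.subset this)
    have hfnotK : ∀ i, f i ∉ K := fun i => (hfD i).2
    have hCX : ∀ i, C i ⊆ X := fun i =>
      (hCsub i).trans (insert_subset (hfD i).1 hKX)
    refine ⟨C, fun i => ⟨hCcirc i, hCX i⟩, fun j => ?_⟩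
    constructor
    · exact iUnion_subset fun i => iUnion_subset fun _ => subset_iUnion C i
    · intro hsub
      have hdj : f j ∈ ⋃ i, C i := mem_iUnion.mpr ⟨j, hfC j⟩
      have := hsub hdj
      rw [mem_iUnion] at this
      obtain ⟨i, hi⟩ := this
      rw [mem_iUnion] at hi
      obtain ⟨hij, hmem⟩ := hi
      rcases hCsub i hmem with h | h
      · exact hij (hfinj h).symm
      · exact hfnotK j h
  · -- upper bound
    rintro n ⟨C, hC, hnr⟩
    have hCX : ∀ i, C i ⊆ X := fun i => (hC i).2
    have hCcirc : ∀ i, IsMCircuit M (C i) := fun i => (hC i).1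
    have hex : ∀ j, ∃ x, x ∈ (⋃ i, C i) ∧ x ∉ ⋃ i, ⋃ (_ : i ≠ j), C i := by
      intro j
      obtain ⟨x, hx1, hx2⟩ := exists_of_ssubset (hnr j)
      exact ⟨x, hx1, hx2⟩
    choose e he1 he2 using hex
    have heC : ∀ j, e j ∈ C j := by
      intro j
      obtain ⟨k, hk⟩ := mem_iUnion.mp (he1 j)
      by_cases hkj : k = j
      · exact hkj ▸ hk
      · exact absurd (mem_iUnion.mpr ⟨k, mem_iUnion.mpr ⟨hkj, hk⟩⟩) (he2 j)
    have heC' : ∀ i j, i ≠ j → e j ∉ C i := by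
      intro i j hij hmem
      exact he2 j (mem_iUnion.mpr ⟨i, mem_iUnion.mpr ⟨hij, hmem⟩⟩)
    have heinj : Function.Injective e := by
      intro i j hij
      by_contra hne
      have hji : e j ∈ C i := by rw [← hij]; exact heC i
      exact heC' i j hne hji
    set U : Set α := ⋃ i, C i with hU
    have hUX : U ⊆ X := iUnion_subset hCX
    set S : Set α := U \ range e with hS
    have hSE : S ⊆ M.E := (diff_subset.trans hUX).trans hX
    have hUcl : U ⊆ M.closure S := by
      intro u hu
      obtain ⟨k, hk⟩ := mem_iUnion.mp hu
      by_cases hur : u ∈ range e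
      · obtain ⟨j, rfl⟩ := hur
        have hkj : k = j := by
          by_contra hne
          exact heC' k j hne hk
        subst hkj
        have hsub : C k \ {e k} ⊆ S := by
          intro y ⟨hy1, hy2⟩
          refine ⟨mem_iUnion.mpr ⟨k, hy1⟩, ?_⟩
          rintro ⟨i, rfl⟩
          by_cases hik : i = k
          · exact hy2 (by rw [hik]; exact rfl)
          · exact heC' k i (fun h => hik h.symm) hy1
        exact M.closure_subset_closure hsub (circuit_mem_closure_diff (hCcirc k) hk)
      · exact M.subset_closure S hSE ⟨hu, hur⟩
    obtain ⟨J, hJ⟩ := M.exists_isBasis S hSE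
    obtain ⟨K, hK, hJK⟩ := hJ.indep.subset_isBasis_of_subset
      (hJ.subset.trans (diff_subset.trans hUX)) hX
    have hrk : mrank M X = K.ncard := mrank_eq_of_basis hK
    have hrange : range e ⊆ X \ K := by
      rintro _ ⟨j, rfl⟩
      refine ⟨hUX (he1 j), fun hejK => ?_⟩
      have hejJ : e j ∉ J := fun h => (hJ.subset h).2 ⟨j, rfl⟩
      have hJsub : J ⊆ K \ {e j} := fun x hx => ⟨hJK hx, fun hxe => hejJ (hxe ▸ hx)⟩
      have : e j ∈ M.closure (K \ {e j}) := by
        have h1 : e j ∈ M.closure J := by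
          rw [hJ.closure_eq_closure]
          exact hUcl (he1 j)
        exact M.closure_subset_closure hJsub h1
      exact hK.indep.notMem_closure_sdiff_of_mem hejK this
    have hn : (range e).ncard = n := by
      rw [← Nat.card_coe_set_eq, Nat.card_range_of_injective heinj, Nat.card_eq_fintype_card,
        Fintype.card_fin]
    calc n = (range e).ncard := hn.symm
      _ ≤ (X \ K).ncard := Set.ncard_le_ncard hrange (hXfin.subset diff_subset)
      _ = X.ncard - K.ncard := Set.ncard_diff hK.subset (hXfin.subset hK.subset)
      _ = X.ncard - mrank M X := by rw [hrk]
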